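/- Let n_1 < n_2 < n_3 < ⋯ be a strictly increasing sequence of positive integers satisfying n_{i+1} ≤ 2·n_i for every index i. Then: (a) for every pair of indices i < m one has 1/n_i ≤ ∑_{i<j≤m} 1/n_j + 1/n_m; and (b) if moreover the strict inequality n_{i+1} < 2·n_i holds for infinitely many indices i, then 1/n_m < ∑_{j>m} 1/n_j holds for every index m. -/

import Mathlib

open scoped ENNReal

lemma keyQ (n : ℕ → ℕ) (hpos : ∀ i, 0 < n i) (hub : ∀ i, n (i + 1) ≤ 2 * n i)
    (i : ℕ) : (1 : ℚ) / n i ≤ 1 / n (i+1) + 1 / n (i+1) := by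
  have h1 : (0:ℚ) < n i := by exact_mod_cast hpos i
  have h2 : (0:ℚ) < n (i+1) := by exact_mod_cast hpos (i+1)
  have h3 : (n (i+1) : ℚ) ≤ 2 * n i := by exact_mod_cast hub i
  rw [← add_div, div_le_div_iff₀ h1 h2]
  nlinarith

lemma lemA (n : ℕ → ℕ) (hpos : ∀ i, 0 < n i) (hub : ∀ i, n (i + 1) ≤ 2 * n i)
    (i m : ℕ) (him : i < m) :
    (1 : ℚ) / (n i) ≤ (∑ j ∈ Finset.Ioc i m, (1 : ℚ) / (n j)) + 1 / (n m) := by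
  induction m, him using Nat.le_induction with
  | base =>
    have : ∑ j ∈ Finset.Ioc i (i+1), (1:ℚ)/(n j) = 1 / n (i+1) := by
      rw [Finset.sum_Ioc_succ_top le_rfl, Finset.Ioc_self, Finset.sum_empty, zero_add]
    rw [this]
    exact keyQ n hpos hub i
  | succ m hm ih =>
    have key := keyQ n hpos hub m
    calc (1:ℚ)/n i ≤ (∑ j ∈ Finset.Ioc i m, (1 : ℚ) / (n j)) + 1 / (n m) := ih
      _ ≤ (∑ j ∈ Finset.Ioc i m, (1 : ℚ) / (n j)) + (1 / n (m+1) + 1 / n (m+1)) := by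
          linarith
      _ = (∑ j ∈ Finset.Ioc i (m+1), (1 : ℚ) / (n j)) + 1 / (n (m+1)) := by
          rw [Finset.sum_Ioc_succ_top (le_of_lt hm)]; ring

lemma keyE (n : ℕ → ℕ) (i : ℕ) (h : n (i+1) ≤ 2 * n i) :
    ((n i : ℝ≥0∞))⁻¹ ≤ ((n (i+1) : ℝ≥0∞))⁻¹ + ((n (i+1) : ℝ≥0∞))⁻¹ := by
  have e1 : ((n (i+1) : ℝ≥0∞))⁻¹ + ((n (i+1) : ℝ≥0∞))⁻¹
      = ((n (i+1) : ℝ≥0∞) / 2)⁻¹ := by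
    rw [ENNReal.inv_div (by simp) (by simp), div_eq_mul_inv, two_mul]
  rw [e1, ENNReal.inv_le_inv, ENNReal.div_le_iff_le_mul (by simp) (by simp)]
  exact_mod_cast le_trans h (by omega)

lemma keyE' (n : ℕ → ℕ) (i : ℕ) (h : n (i+1) < 2 * n i) :
    ((n i : ℝ≥0∞))⁻¹ < ((n (i+1) : ℝ≥0∞))⁻¹ + ((n (i+1) : ℝ≥0∞))⁻¹ := by
  have e1 : ((n (i+1) : ℝ≥0∞))⁻¹ + ((n (i+1) : ℝ≥0∞))⁻¹
      = ((n (i+1) : ℝ≥0∞) / 2)⁻¹ := by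
    rw [ENNReal.inv_div (by simp) (by simp), div_eq_mul_inv, two_mul]
  rw [e1, ENNReal.inv_lt_inv, ENNReal.div_lt_iff (by simp) (by simp)]
  exact_mod_cast lt_of_lt_of_le h (by omega)

lemma lemAE (n : ℕ → ℕ) (hub : ∀ i, n (i + 1) ≤ 2 * n i)
    (i m : ℕ) (him : i < m) :
    ((n i : ℝ≥0∞))⁻¹ ≤ (∑ j ∈ Finset.Ioc i m, ((n j : ℝ≥0∞))⁻¹) + ((n m : ℝ≥0∞))⁻¹ := by
  induction m, him using Nat.le_induction with
  | base =>
    have : ∑ j ∈ Finset.Ioc i (i+1), ((n j:ℝ≥0∞))⁻¹ = ((n (i+1):ℝ≥0∞))⁻¹ := by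
      rw [Finset.sum_Ioc_succ_top le_rfl, Finset.Ioc_self, Finset.sum_empty, zero_add]
    rw [this]
    exact keyE n i (hub i)
  | succ m hm ih =>
    calc ((n i:ℝ≥0∞))⁻¹ ≤ (∑ j ∈ Finset.Ioc i m, ((n j:ℝ≥0∞))⁻¹) + ((n m:ℝ≥0∞))⁻¹ := ih
      _ ≤ (∑ j ∈ Finset.Ioc i m, ((n j:ℝ≥0∞))⁻¹)
          + (((n (m+1):ℝ≥0∞))⁻¹ + ((n (m+1):ℝ≥0∞))⁻¹) :=
          add_le_add_right (keyE n m (hub m)) _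
      _ = (∑ j ∈ Finset.Ioc i (m+1), ((n j:ℝ≥0∞))⁻¹) + ((n (m+1):ℝ≥0∞))⁻¹ := by
          rw [Finset.sum_Ioc_succ_top (le_of_lt hm)]; ring

lemma lemBE (n : ℕ → ℕ) (hpos : ∀ i, 0 < n i) (hub : ∀ i, n (i + 1) ≤ 2 * n i)
    (d : ℕ) : ∀ m : ℕ, n (m + d + 1) < 2 * n (m + d) →
    ((n m : ℝ≥0∞))⁻¹ < (∑ j ∈ Finset.Ioc m (m + d + 1), ((n j : ℝ≥0∞))⁻¹)
      + ((n (m + d + 1) : ℝ≥0∞))⁻¹ := by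
  induction d with
  | zero =>
    intro m h
    have e : ∑ j ∈ Finset.Ioc m (m+0+1), ((n j:ℝ≥0∞))⁻¹ = ((n (m+1):ℝ≥0∞))⁻¹ := by
      simp only [Nat.add_zero]
      rw [Finset.sum_Ioc_succ_top le_rfl, Finset.Ioc_self, Finset.sum_empty, zero_add]
    simp only [Nat.add_zero] at *
    rw [e]
    exact keyE' n m h
  | succ d ih =>
    intro m h
    have h' : n ((m+1) + d + 1) < 2 * n ((m+1) + d) := by
      have : (m+1) + d = m + (d+1) := by omega
      rw [this]; exact h
    have hfin : ((n (m+1):ℝ≥0∞))⁻¹ ≠ ⊤ := by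
      simp only [ne_eq, ENNReal.inv_eq_top, Nat.cast_eq_zero]
      exact (hpos (m+1)).ne'
    have step := keyE n m (hub m)
    have ihm := ih (m+1) h'
    calc ((n m:ℝ≥0∞))⁻¹ ≤ ((n (m+1):ℝ≥0∞))⁻¹ + ((n (m+1):ℝ≥0∞))⁻¹ := step
      _ < ((n (m+1):ℝ≥0∞))⁻¹ +
          ((∑ j ∈ Finset.Ioc (m+1) ((m+1) + d + 1), ((n j:ℝ≥0∞))⁻¹)
            + ((n ((m+1) + d + 1):ℝ≥0∞))⁻¹) := ENNReal.add_lt_add_left hfin ihm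
      _ = (∑ j ∈ Finset.Ioc m (m + (d+1) + 1), ((n j:ℝ≥0∞))⁻¹)
            + ((n (m + (d+1) + 1):ℝ≥0∞))⁻¹ := by
          have e1 : ((n (m+1):ℝ≥0∞))⁻¹ = ∑ j ∈ Finset.Ioc m (m+1), ((n j:ℝ≥0∞))⁻¹ := by
            rw [Finset.sum_Ioc_succ_top le_rfl, Finset.Ioc_self, Finset.sum_empty, zero_add]
          have e2 : (m+1) + d + 1 = m + (d+1) + 1 := by omega
          rw [e2, e1, ← add_assoc,
            Finset.sum_Ioc_consecutive _ (by omega) (by omega : m+1 ≤ m + (d+1) + 1)]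

lemma iocRange (f : ℕ → ℝ≥0∞) (m M : ℕ) :
    ∑ j ∈ Finset.Ioc m M, f j = ∑ j ∈ Finset.range (M - m), f (m + 1 + j) := by
  have e : Finset.Ioc m M = Finset.Ico (m+1) (M+1) := by
    ext x; simp
  rw [e, Finset.sum_Ico_eq_sum_range]
  have : M + 1 - (m + 1) = M - m := by omega
  rw [this]

lemma splitE (f : ℕ → ℝ≥0∞) (k : ℕ) :
    ∑ i ∈ Finset.range k, f i + ∑' i, f (i + k) = ∑' i, f i :=
  (HasSum.sum_range_add (ENNReal.summable.hasSum)).tsum_eq.symm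

lemma lemTail (n : ℕ → ℕ) (hmono : StrictMono n) (hpos : ∀ i, 0 < n i)
    (hub : ∀ i, n (i + 1) ≤ 2 * n i) (m : ℕ) :
    ((n m : ℝ≥0∞))⁻¹ ≤ ∑' j : ℕ, ((n (m + 1 + j) : ℝ≥0∞))⁻¹ := by
  apply ENNReal.le_of_forall_pos_le_add
  intro ε hε _
  obtain ⟨M0, hM0⟩ := ENNReal.exists_inv_nat_lt (a := (ε : ℝ≥0∞))
    (by exact_mod_cast hε.ne')
  set M := max M0 (m+1) with hM
  have hmM : m < M := lt_of_lt_of_le (Nat.lt_succ_self m) (le_max_right _ _)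
  have h1 := lemAE n hub m M hmM
  have h2 : (∑ j ∈ Finset.Ioc m M, ((n j : ℝ≥0∞))⁻¹)
      ≤ ∑' j : ℕ, ((n (m + 1 + j) : ℝ≥0∞))⁻¹ := by
    rw [iocRange]
    exact ENNReal.sum_le_tsum _
  have h3 : ((n M : ℝ≥0∞))⁻¹ ≤ (ε : ℝ≥0∞) := by
    calc ((n M : ℝ≥0∞))⁻¹ ≤ ((M0 : ℝ≥0∞))⁻¹ := by
          rw [ENNReal.inv_le_inv]
          exact_mod_cast le_trans (le_max_left M0 (m+1)) hmono.le_apply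
      _ ≤ ε := le_of_lt hM0
  calc ((n m : ℝ≥0∞))⁻¹ ≤ _ := h1
    _ ≤ (∑' j : ℕ, ((n (m + 1 + j) : ℝ≥0∞))⁻¹) + ε := add_le_add h2 h3

/-- Let `n₁ < n₂ < ⋯` be positive integers with
`n (i+1) ≤ 2 * n i` for every `i`. Then (a) for all indices `i < m` one has
`1 / n i ≤ ∑_{i < j ≤ m} 1 / n j + 1 / n m`; and (b) if moreover
`n (i+1) < 2 * n i` for infinitely many `i`, then
`1 / n m < ∑_{j > m} 1 / n j` for every `m` (sum in `ℝ≥0∞`, possibly `+∞`). -/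
theorem stmt15 (n : ℕ → ℕ) (hmono : StrictMono n) (hpos : ∀ i, 0 < n i)
    (hub : ∀ i, n (i + 1) ≤ 2 * n i) :
    (∀ i m : ℕ, i < m →
      (1 : ℚ) / (n i) ≤ (∑ j ∈ Finset.Ioc i m, (1 : ℚ) / (n j)) + 1 / (n m)) ∧
    ({i : ℕ | n (i + 1) < 2 * n i}.Infinite →
      ∀ m : ℕ, ((n m : ℝ≥0∞))⁻¹ < ∑' j : ℕ, ((n (m + 1 + j) : ℝ≥0∞))⁻¹) := by
  constructor
  · exact lemA n hpos hub
  · intro hinf m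
    obtain ⟨i₀, hi₀, hmi₀⟩ := hinf.exists_gt m
    obtain ⟨d, rfl⟩ : ∃ d, i₀ = m + d := ⟨i₀ - m, by omega⟩
    have hi₀' : n (m + d + 1) < 2 * n (m + d) := hi₀
    have hB := lemBE n hpos hub d m hi₀'
    have hT := lemTail n hmono hpos hub (m + d + 1)
    have hsplit := splitE (fun j => ((n (m + 1 + j) : ℝ≥0∞))⁻¹) (d + 1)
    have e1 : ∑ i ∈ Finset.range (d + 1), ((n (m + 1 + i) : ℝ≥0∞))⁻¹
        = ∑ j ∈ Finset.Ioc m (m + d + 1), ((n j : ℝ≥0∞))⁻¹ := by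
      rw [iocRange]
      have : m + d + 1 - m = d + 1 := by omega
      rw [this]
    have e2 : (∑' i : ℕ, ((n (m + 1 + (i + (d + 1))) : ℝ≥0∞))⁻¹)
        = ∑' j : ℕ, ((n ((m + d + 1) + 1 + j) : ℝ≥0∞))⁻¹ :=
      tsum_congr fun i => by
        rw [show m + 1 + (i + (d + 1)) = m + d + 1 + 1 + i from by omega]
    rw [e1, e2] at hsplit
    calc ((n m : ℝ≥0∞))⁻¹
        < (∑ j ∈ Finset.Ioc m (m + d + 1), ((n j : ℝ≥0∞))⁻¹)
          + ((n (m + d + 1) : ℝ≥0∞))⁻¹ := hB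
      _ ≤ (∑ j ∈ Finset.Ioc m (m + d + 1), ((n j : ℝ≥0∞))⁻¹)
          + ∑' j : ℕ, ((n ((m + d + 1) + 1 + j) : ℝ≥0∞))⁻¹ := add_le_add_right hT _
      _ = ∑' j : ℕ, ((n (m + 1 + j) : ℝ≥0∞))⁻¹ := hsplit
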